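/- arXiv:1303.3645 — 3 statements merged into one kernel-verified Lean document; each statement's English description precedes it below -/
import Mathlib

section
/- For every sentence φ of classical first-order logic (over a finite signature of function symbols and predicate symbols), one can construct a corresponding LTL^FO sentence ψ such that φ has a finite model (in the classical first-order sense) if and only if ψ is satisfiable, i.e., there exists a first-order temporal structure (𝔄̄, w) with (𝔄̄, w) ⊨ ψ. Concretely, ψ is obtained from φ by introducing a fresh unary uninterpreted predicate d, replacing every ∀x.θ by ∀x:d.θ and every ∃x.θ by ∃x:d.θ, conjoining d(c) for every constant symbol c, conjoining ∀x₁:d.…∀xₙ:d. d(f(x₁,…,xₙ)) for every n-ary function symbol f, conjoining ∀(x₁,…,xₙ):p. d(x₁)∧…∧d(xₙ) for every n-ary predicate symbol p, and conjoining ∃x:d. d(x). -/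
/-!
LTL^FO: a first-order temporal logic.  One-sorted signatures with function
symbols, uninterpreted predicate symbols (U-operators, interpreted via the
trace) and interpreted predicate symbols (I-operators), terms, formulae,
first-order temporal structures, and the satisfaction relation in which
quantifiers range over the actions of the current event.
-/

namespace LTLFO

/-- A (one-sorted) signature: function symbols `Func`, uninterpreted predicate
symbols `UPred` and interpreted predicate symbols `IPred`, with their arities. -/
structure Sig : Type 1 where
  Func : Type
  arF : Func → ℕ
  UPred : Type
  arU : UPred → ℕ
  IPred : Type
  arI : IPred → ℕ

/-- Terms over a signature, built from variables (named by naturals) and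
function symbols. -/
inductive Tm (s : Sig) : Type where
  | var (x : ℕ) : Tm s
  | func (f : s.Func) (args : Fin (s.arF f) → Tm s) : Tm s

/-- LTL^FO formulae:
`φ ::= ⊤ | p(t⃗) | r(t⃗) | ¬φ | φ∧φ | Xφ | φUφ | ∀(x₁,…,xₙ):p. φ`. -/
inductive FOForm (s : Sig) : Type where
  | tt : FOForm s
  | uatom (p : s.UPred) (ts : Fin (s.arU p) → Tm s) : FOForm s
  | iatom (r : s.IPred) (ts : Fin (s.arI r) → Tm s) : FOForm s
  | neg (φ : FOForm s) : FOForm s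
  | and (φ ψ : FOForm s) : FOForm s
  | next (φ : FOForm s) : FOForm s
  | until_ (φ ψ : FOForm s) : FOForm s
  | forall_ (p : s.UPred) (xs : Fin (s.arU p) → ℕ) (φ : FOForm s) : FOForm s

/-- An action `(p, d⃗)`: a U-operator together with a matching tuple of domain values. -/
abbrev Action (s : Sig) (D : Type) : Type := Σ p : s.UPred, (Fin (s.arU p) → D)

variable {s : Sig} {D : Type}

/-- Evaluation of a term in a domain `D`, given an interpretation of the function
symbols and a valuation of the variables. -/
def Tm.eval (fI : (f : s.Func) → (Fin (s.arF f) → D) → D) (v : ℕ → D) : Tm s → D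
  | .var x => v x
  | .func f a => fI f (fun k => Tm.eval fI v (a k))

/-- Update a valuation `v` by binding the variables `xs k` to the values `d k`
(i.e. `v ∪ {x₁ ↦ d₁, …, xₙ ↦ dₙ}`). -/
def updVec {n : ℕ} (v : ℕ → D) (xs : Fin n → ℕ) (d : Fin n → D) : ℕ → D :=
  fun x =>
    match (List.finRange n).find? (fun k => xs k == x) with
    | some k => d k
    | none => v x

/-- An (infinite) first-order temporal structure `(𝔄̄, w)` over a fixed domain `D`:
a rigid interpretation of the function symbols, a per-position interpretation of
the I-operators, and a trace of events (finite sets of actions). -/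
structure TStruct (s : Sig) (D : Type) : Type where
  funcI : (f : s.Func) → (Fin (s.arF f) → D) → D
  predI : ℕ → (r : s.IPred) → (Fin (s.arI r) → D) → Prop
  trace : ℕ → Set (Action s D)
  finEv : ∀ i, (trace i).Finite

/-- The satisfaction relation `(𝔄̄, w, v, i) ⊨ φ` (infinite-trace semantics).
Quantifiers range over the actions of the current event. -/
def Sat (M : TStruct s D) : FOForm s → (ℕ → D) → ℕ → Prop
  | .tt, _, _ => True
  | .uatom p ts, v, i => (⟨p, fun k => Tm.eval M.funcI v (ts k)⟩ : Action s D) ∈ M.trace i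
  | .iatom r ts, v, i => M.predI i r (fun k => Tm.eval M.funcI v (ts k))
  | .neg φ, v, i => ¬ Sat M φ v i
  | .and φ ψ, v, i => Sat M φ v i ∧ Sat M ψ v i
  | .next φ, v, i => Sat M φ v (i + 1)
  | .until_ φ ψ, v, i => ∃ k, i ≤ k ∧ Sat M ψ v k ∧ ∀ j, i ≤ j → j < k → Sat M φ v j
  | .forall_ p xs φ, v, i =>
      ∀ d : Fin (s.arU p) → D, (⟨p, d⟩ : Action s D) ∈ M.trace i → Sat M φ (updVec v xs d) i

/-- The variables occurring in a term. -/
def Tm.vars : Tm s → Set ℕ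
  | .var x => {x}
  | .func _ a => ⋃ k, Tm.vars (a k)

/-- The free variables of a formula. -/
def FOForm.fv : FOForm s → Set ℕ
  | .tt => ∅
  | .uatom _ ts => ⋃ k, Tm.vars (ts k)
  | .iatom _ ts => ⋃ k, Tm.vars (ts k)
  | .neg φ => FOForm.fv φ
  | .and φ ψ => FOForm.fv φ ∪ FOForm.fv ψ
  | .next φ => FOForm.fv φ
  | .until_ φ ψ => FOForm.fv φ ∪ FOForm.fv ψ
  | .forall_ _ xs φ => FOForm.fv φ \ Set.range xs

/-- A sentence is a formula without free variables. -/
def FOForm.Closed (φ : FOForm s) : Prop := FOForm.fv φ = ∅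

/-- An LTL^FO sentence is satisfiable iff some first-order temporal structure
(over some nonempty domain) satisfies it at position 0. -/
def FOSatisfiable (s : Sig) (φ : FOForm s) : Prop :=
  ∃ (D : Type) (_ : Nonempty D) (M : TStruct s D) (v : ℕ → D), Sat M φ v 0

end LTLFO

namespace LTLFO

/-- A classical first-order signature: function symbols and predicate symbols. -/
structure CSig : Type 1 where
  Func : Type
  arF : Func → ℕ
  Pred : Type
  arP : Pred → ℕ

/-- The LTL^FO signature corresponding to a classical signature: the predicate
symbols become U-operators, together with one fresh unary U-operator `d`
(represented by `Sum.inr ()`); there are no I-operators. -/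
def CSig.toSig (c : CSig) : Sig where
  Func := c.Func
  arF := c.arF
  UPred := c.Pred ⊕ Unit
  arU := fun p => match p with
    | .inl p => c.arP p
    | .inr _ => 1
  IPred := Empty
  arI := fun r => r.elim

/-- Classical first-order formulae over `c` (with `∃x.θ := ¬∀x.¬θ` derived). -/
inductive CForm (c : CSig) : Type where
  | atom (p : c.Pred) (ts : Fin (c.arP p) → Tm c.toSig) : CForm c
  | neg (φ : CForm c) : CForm c
  | and (φ ψ : CForm c) : CForm c
  | all (x : ℕ) (φ : CForm c) : CForm c

/-- Classical Tarskian satisfaction. -/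
def CSat {c : CSig} {D : Type}
    (fI : (f : c.Func) → (Fin (c.arF f) → D) → D)
    (pI : (p : c.Pred) → (Fin (c.arP p) → D) → Prop) :
    CForm c → (ℕ → D) → Prop
  | .atom p ts, v => pI p (fun k => Tm.eval fI v (ts k))
  | .neg φ, v => ¬ CSat fI pI φ v
  | .and φ ψ, v => CSat fI pI φ v ∧ CSat fI pI ψ v
  | .all x φ, v => ∀ d : D, CSat fI pI φ (Function.update v x d)

/-- Free variables of a classical formula. -/
def CForm.fv {c : CSig} : CForm c → Set ℕ
  | .atom _ ts => ⋃ k, Tm.vars (ts k)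
  | .neg φ => CForm.fv φ
  | .and φ ψ => CForm.fv φ ∪ CForm.fv ψ
  | .all x φ => CForm.fv φ \ {x}

/-- A classical sentence. -/
def CForm.Closed {c : CSig} (φ : CForm c) : Prop := CForm.fv φ = ∅

/-- `φ` has a finite model (in the classical first-order sense). -/
def HasFiniteModel {c : CSig} (φ : CForm c) : Prop :=
  ∃ (D : Type) (_ : Fintype D) (_ : Nonempty D)
    (fI : (f : c.Func) → (Fin (c.arF f) → D) → D)
    (pI : (p : c.Pred) → (Fin (c.arP p) → D) → Prop),
    ∀ v : ℕ → D, CSat fI pI φ v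

/-- The atom `d(t)` for the fresh unary U-operator `d`. -/
def dAtom {c : CSig} (t : Tm c.toSig) : FOForm c.toSig :=
  .uatom (Sum.inr ()) (fun _ => t)

/-- The main translation: replace every `∀x.θ` by `∀x:d.θ` (and hence every
`∃x.θ = ¬∀x.¬θ` by `∃x:d.θ`); predicate symbols become U-operators. -/
def trMain {c : CSig} : CForm c → FOForm c.toSig
  | .atom p ts => .uatom (Sum.inl p) ts
  | .neg φ => .neg (trMain φ)
  | .and φ ψ => .and (trMain φ) (trMain ψ)
  | .all x φ => .forall_ (Sum.inr ()) (fun _ => x) (trMain φ)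

/-- Finite conjunction (`tt` for the empty one). -/
def bigAnd {s : Sig} : List (FOForm s) → FOForm s
  | [] => .tt
  | [φ] => φ
  | φ :: rest => .and φ (bigAnd rest)

/-- `∀x₀:d. … ∀x_{n-1}:d. φ`. -/
def wrapForalls {c : CSig} : ℕ → FOForm c.toSig → FOForm c.toSig
  | 0, φ => φ
  | n + 1, φ => wrapForalls n (.forall_ (Sum.inr ()) (fun _ => (n : ℕ)) φ)

/-- For an `n`-ary function symbol `f`, the conjunct
`∀x₁:d.…∀xₙ:d. d(f(x₁,…,xₙ))`  (for `n = 0`, i.e. a constant `c`, this is `d(c)`). -/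
def funcAx {c : CSig} (f : c.Func) : FOForm c.toSig :=
  wrapForalls (c.arF f) (dAtom (Tm.func f (fun k => Tm.var (k : ℕ))))

/-- For an `n`-ary predicate symbol `p`, the conjunct
`∀(x₁,…,xₙ):p. d(x₁) ∧ … ∧ d(xₙ)`. -/
def predAx {c : CSig} (p : c.Pred) : FOForm c.toSig :=
  .forall_ (Sum.inl p) (fun k => (k : ℕ))
    (bigAnd ((List.finRange (c.arP p)).map (fun k => dAtom (Tm.var (k : ℕ)))))

/-- The conjunct `∃x:d. d(x)` (the domain is not empty). -/
def nonemptyAx {c : CSig} : FOForm c.toSig :=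
  .neg (.forall_ (Sum.inr ()) (fun _ => 0) (.neg (dAtom (Tm.var 0))))

/-- The full translation `ψ` of the classical sentence `φ`. -/
noncomputable def translate {c : CSig} [Fintype c.Func] [Fintype c.Pred]
    (φ : CForm c) : FOForm c.toSig :=
  bigAnd (trMain φ ::
    ((Finset.univ : Finset c.Func).toList.map funcAx ++
      (Finset.univ : Finset c.Pred).toList.map predAx ++ [nonemptyAx]))
section Aux

variable {s : Sig} {c : CSig} {D : Type}

lemma fin1_const (d : Fin 1 → D) : d = fun _ => d 0 := by
  funext k; rw [Subsingleton.elim k 0]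

lemma updVec_one (v : ℕ → D) (xs : Fin 1 → ℕ) (d : Fin 1 → D) :
    updVec v xs d = Function.update v (xs 0) (d 0) := by
  funext y
  simp only [updVec]
  have e : List.finRange 1 = [0] := rfl
  rw [e]
  rcases eq_or_ne (xs 0) y with h | h
  · rw [List.find?_cons_of_pos (p := fun k => xs k == y) (by simpa using h)]
    rw [← h, Function.update_self]
  · rw [List.find?_cons_of_neg (p := fun k => xs k == y) (by simpa using h), List.find?_nil]
    rw [Function.update_of_ne (fun h' => h h'.symm)]

lemma sat_bigAnd (M : TStruct s D) :
    ∀ (l : List (FOForm s)) (v : ℕ → D) (i : ℕ),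
      Sat M (bigAnd l) v i ↔ ∀ ψ ∈ l, Sat M ψ v i := by
  intro l
  induction l with
  | nil => intro v i; simp [bigAnd, Sat]
  | cons a rest ih =>
    intro v i
    cases rest with
    | nil => simp [bigAnd]
    | cons b t =>
      have e : bigAnd (a :: b :: t) = .and a (bigAnd (b :: t)) := rfl
      rw [e]
      simp only [Sat, ih]
      simp

lemma eval_agree (fI : (f : s.Func) → (Fin (s.arF f) → D) → D) :
    ∀ (t : Tm s) (v w : ℕ → D), (∀ x ∈ Tm.vars t, v x = w x) →
      Tm.eval fI v t = Tm.eval fI w t := by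
  intro t
  induction t with
  | var x => intro v w h; exact h x (by simp [Tm.vars])
  | func f a ih =>
    intro v w h
    simp only [Tm.eval]
    congr 1
    funext k
    exact ih k v w (fun x hx => h x (by simp only [Tm.vars, Set.mem_iUnion]; exact ⟨k, hx⟩))

lemma sat_trMain_agree (M : TStruct c.toSig D) :
    ∀ (θ : CForm c) (v w : ℕ → D) (i : ℕ), (∀ x ∈ CForm.fv θ, v x = w x) →
      (Sat M (trMain θ) v i ↔ Sat M (trMain θ) w i) := by
  intro θ
  induction θ with
  | atom p ts =>
    intro v w i h
    simp only [trMain, Sat]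
    have : (fun k : Fin (c.toSig.arU (Sum.inl p)) => Tm.eval M.funcI v (ts k))
        = fun k => Tm.eval M.funcI w (ts k) := by
      funext k
      exact eval_agree M.funcI (ts k) v w
        (fun x hx => h x (by simp only [CForm.fv, Set.mem_iUnion]; exact ⟨k, hx⟩))
    rw [this]
    exact Iff.rfl
  | neg θ ih =>
    intro v w i h
    simp only [trMain, Sat]
    exact not_congr (ih v w i h)
  | and θ ψ ih1 ih2 =>
    intro v w i h
    simp only [trMain, Sat]
    exact and_congr (ih1 v w i fun x hx => h x (Or.inl hx)) (ih2 v w i fun x hx => h x (Or.inr hx))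
  | all x θ ih =>
    intro v w i h
    simp only [trMain, Sat]
    refine forall_congr' fun d => imp_congr Iff.rfl ?_
    erw [updVec_one, updVec_one]
    apply ih
    intro y hy
    rcases eq_or_ne y x with rfl | hne
    · simp
    · rw [Function.update_of_ne hne, Function.update_of_ne hne]
      exact h y (by simp only [CForm.fv, Set.mem_diff, Set.mem_singleton_iff]; exact ⟨hy, hne⟩)

end Aux
section Aux2

variable {c : CSig} {D : Type}

lemma wrapForalls_intro (M : TStruct c.toSig D) (i : ℕ) :
    ∀ (n : ℕ) (ψ : FOForm c.toSig), (∀ v, Sat M ψ v i) →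
      ∀ v, Sat M (wrapForalls n ψ) v i := by
  intro n
  induction n with
  | zero => intro ψ h v; exact h v
  | succ n ih =>
    intro ψ h v
    apply ih
    intro w
    simp only [wrapForalls, Sat]
    intro d _
    exact h _

lemma wrapForalls_elim (M : TStruct c.toSig D) (i : ℕ) :
    ∀ (n : ℕ) (ψ : FOForm c.toSig) (v : ℕ → D), Sat M (wrapForalls n ψ) v i →
      ∀ a : Fin n → D,
        (∀ k, (⟨Sum.inr (), fun _ => a k⟩ : Action c.toSig D) ∈ M.trace i) →
        Sat M ψ (fun x => if h : x < n then a ⟨x, h⟩ else v x) i := by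
  intro n
  induction n with
  | zero =>
    intro ψ v h a _
    have e : (fun x => if h : x < 0 then a ⟨x, h⟩ else v x) = v := by
      funext x; simp
    rw [e]; exact h
  | succ n ih =>
    intro ψ v h a ha
    have h' := ih (.forall_ (Sum.inr ()) (fun _ => (n : ℕ)) ψ) v h
      (fun k => a k.castSucc) (fun k => ha _)
    have h2 := h' (fun _ => a (Fin.last n)) (ha (Fin.last n))
    erw [updVec_one] at h2
    have e : Function.update
        (fun x => if h : x < n then a (Fin.castSucc ⟨x, h⟩) else v x) ((n : ℕ)) (a (Fin.last n))
        = fun x => if h : x < n + 1 then a ⟨x, h⟩ else v x := by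
      funext x
      rcases eq_or_ne x n with rfl | hne
      · rw [Function.update_self]
        simp [Fin.last]
      · rw [Function.update_of_ne hne]
        rcases lt_or_ge x n with hlt | hge
        · rw [dif_pos hlt, dif_pos (by omega)]
          congr 1
        · rw [dif_neg (by omega), dif_neg (by omega)]
    rw [e] at h2
    exact h2

lemma forward_tr (M : TStruct c.toSig D)
    (pI : (p : c.Pred) → (Fin (c.arP p) → D) → Prop)
    (hU : ∀ (p : c.Pred) (d : Fin (c.arP p) → D),
      (⟨Sum.inl p, d⟩ : Action c.toSig D) ∈ M.trace 0 ↔ pI p d)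
    (hD : ∀ x : D, (⟨Sum.inr (), fun _ => x⟩ : Action c.toSig D) ∈ M.trace 0) :
    ∀ (θ : CForm c) (v : ℕ → D), Sat M (trMain θ) v 0 ↔ CSat M.funcI pI θ v := by
  intro θ
  induction θ with
  | atom p ts =>
    intro v
    simp only [trMain, Sat, CSat]
    exact hU p _
  | neg θ ih =>
    intro v
    simp only [trMain, Sat, CSat]
    exact not_congr (ih v)
  | and θ ψ ih1 ih2 =>
    intro v
    simp only [trMain, Sat, CSat]
    exact and_congr (ih1 v) (ih2 v)
  | all x θ ih =>
    intro v
    simp only [trMain, Sat, CSat]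
    constructor
    · intro h e
      have := h (fun _ => e) (hD e)
      erw [updVec_one] at this
      exact (ih _).mp this
    · intro h d hd
      change Fin 1 → D at d
      erw [updVec_one]
      exact (ih _).mpr (h (d 0))

lemma eval_subtype (M : TStruct c.toSig D) (S : Set D)
    (fI' : (f : c.Func) → (Fin (c.arF f) → S) → S)
    (hfI' : ∀ f a, ((fI' f a : S) : D) = M.funcI f (fun k => ((a k : S) : D))) :
    ∀ (t : Tm c.toSig) (v' : ℕ → S),
      ((Tm.eval fI' v' t : S) : D) = Tm.eval M.funcI (fun x => ((v' x : S) : D)) t := by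
  intro t
  induction t with
  | var x => intro v'; rfl
  | func f a ih =>
    intro v'
    simp only [Tm.eval]
    erw [hfI']
    congr 1
    funext k
    exact ih k v'

lemma backward_tr (M : TStruct c.toSig D) (S : Set D)
    (hS : ∀ x : D, x ∈ S ↔ (⟨Sum.inr (), fun _ => x⟩ : Action c.toSig D) ∈ M.trace 0)
    (fI' : (f : c.Func) → (Fin (c.arF f) → S) → S)
    (hfI' : ∀ f a, ((fI' f a : S) : D) = M.funcI f (fun k => ((a k : S) : D))) :
    ∀ (θ : CForm c) (v' : ℕ → S),
      Sat M (trMain θ) (fun x => ((v' x : S) : D)) 0 ↔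
      CSat fI'
        (fun p d => (⟨Sum.inl p, fun k => ((d k : S) : D)⟩ : Action c.toSig D) ∈ M.trace 0)
        θ v' := by
  intro θ
  induction θ with
  | atom p ts =>
    intro v'
    simp only [trMain, Sat, CSat]
    have e : (fun k : Fin (c.toSig.arU (Sum.inl p)) =>
        Tm.eval M.funcI (fun x => ((v' x : S) : D)) (ts k))
        = fun k => ((Tm.eval fI' v' (ts k) : S) : D) := by
      funext k
      exact (eval_subtype M S fI' hfI' (ts k) v').symm
    rw [e]
    exact Iff.rfl
  | neg θ ih =>
    intro v'
    simp only [trMain, Sat, CSat]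
    exact not_congr (ih v')
  | and θ ψ ih1 ih2 =>
    intro v'
    simp only [trMain, Sat, CSat]
    exact and_congr (ih1 v') (ih2 v')
  | all x θ ih =>
    intro v'
    simp only [trMain, Sat, CSat]
    constructor
    · intro h e
      have hm := (hS (e : D)).mp e.2
      have := h (fun _ => (e : D)) hm
      erw [updVec_one] at this
      have e2 : Function.update (fun x => ((v' x : S) : D)) x ((e : D))
          = fun y => (((Function.update v' x e y : S)) : D) := by
        funext y
        rcases eq_or_ne y x with rfl | hne
        · rw [Function.update_self, Function.update_self]
        · rw [Function.update_of_ne hne, Function.update_of_ne hne]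
      rw [e2] at this
      exact (ih _).mp this
    · intro h d hd
      change Fin 1 → D at d
      erw [updVec_one]
      have hd0 : d 0 ∈ S := by
        rw [hS]
        have e : (fun _ => d 0 : Fin (c.toSig.arU (Sum.inr ())) → D) = d :=
          funext fun k => congrArg d (Subsingleton.elim (α := Fin 1) 0 k)
        rw [e]
        exact hd
      have e2 : Function.update (fun x => ((v' x : S) : D)) x (d 0)
          = fun y => (((Function.update v' x ⟨d 0, hd0⟩ y : S)) : D) := by
        funext y
        rcases eq_or_ne y x with rfl | hne
        · rw [Function.update_self, Function.update_self]
        · rw [Function.update_of_ne hne, Function.update_of_ne hne]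
      rw [e2]
      exact (ih _).mpr (h ⟨d 0, hd0⟩)

end Aux2

/-- For every classical first-order sentence `φ` over a finite
signature, the constructed LTL^FO sentence `ψ = translate φ` satisfies:
`φ` has a finite model iff `ψ` is satisfiable. -/
theorem hasFiniteModel_iff_translate_satisfiable {c : CSig}
    [Fintype c.Func] [Fintype c.Pred]
    (φ : CForm c) (hφ : CForm.Closed φ) :
    HasFiniteModel φ ↔ FOSatisfiable c.toSig (translate φ) := by
  constructor
  · rintro ⟨D, fnt, hne, fI, pI, hsat⟩
    haveI := fnt
    haveI : Finite c.toSig.UPred := inferInstanceAs (Finite (c.Pred ⊕ Unit))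
    haveI : Finite (Action c.toSig D) := inferInstance
    let T : Set (Action c.toSig D) :=
      {a | ∀ (p : c.Pred) (dd : Fin (c.arP p) → D), a = ⟨Sum.inl p, dd⟩ → pI p dd}
    let M : TStruct c.toSig D :=
      ⟨fI, fun _ r => r.elim, fun _ => T, fun _ => Set.toFinite T⟩
    have hU : ∀ (p : c.Pred) (d : Fin (c.arP p) → D),
        (⟨Sum.inl p, d⟩ : Action c.toSig D) ∈ M.trace 0 ↔ pI p d := by
      intro p d
      constructor
      · intro h; exact h p d rfl
      · intro h q dq he
        obtain ⟨h1, h2⟩ := Sigma.mk.inj_iff.mp he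
        obtain rfl : p = q := Sum.inl.inj h1
        rw [← eq_of_heq h2]
        exact h
    have hD : ∀ x : D, (⟨Sum.inr (), fun _ => x⟩ : Action c.toSig D) ∈ M.trace 0 := by
      intro x p dq he
      exact absurd (Sigma.mk.inj_iff.mp he).1 (by simp)
    refine ⟨D, hne, M, fun _ => hne.some, ?_⟩
    rw [translate, sat_bigAnd]
    intro ψ hmem
    simp only [List.mem_cons, List.mem_append, List.mem_map, List.not_mem_nil,
      or_false] at hmem
    rcases hmem with rfl | ⟨⟨f, hf, rfl⟩ | ⟨p, hp, rfl⟩⟩ | rfl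
    · exact (forward_tr M pI hU hD φ _).mpr (hsat _)
    · rw [funcAx]
      refine wrapForalls_intro M 0 _ _ (fun w => ?_) _
      show (⟨Sum.inr (), fun _ =>
        Tm.eval M.funcI w (Tm.func f fun k => Tm.var (k : ℕ))⟩ : Action c.toSig D) ∈ M.trace 0
      exact hD _
    · rw [predAx]
      simp only [Sat]
      intro dd hdd
      rw [sat_bigAnd]
      intro ψ hψ
      simp only [List.mem_map] at hψ
      obtain ⟨k, -, rfl⟩ := hψ
      exact hD _
    · rw [nonemptyAx]
      simp only [Sat]
      intro hcon
      exact hcon (fun _ => hne.some) (hD _) (hD _)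
  · rintro ⟨D, hne, M, v, hsat⟩
    rw [translate, sat_bigAnd] at hsat
    have h1 : Sat M (trMain φ) v 0 := hsat _ List.mem_cons_self
    have hfunc : ∀ f : c.Func, Sat M (funcAx f) v 0 := by
      intro f
      refine hsat _ ?_
      simp only [List.mem_cons, List.mem_append, List.mem_map]
      exact Or.inr (Or.inl (Or.inl ⟨f, Finset.mem_toList.mpr (Finset.mem_univ f), rfl⟩))
    have hnon : Sat M nonemptyAx v 0 := hsat _ (by simp)
    set S : Set D := {x | (⟨Sum.inr (), fun _ => x⟩ : Action c.toSig D) ∈ M.trace 0}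
      with hSdef
    have hS : ∀ x : D, x ∈ S ↔
        (⟨Sum.inr (), fun _ => x⟩ : Action c.toSig D) ∈ M.trace 0 := fun _ => Iff.rfl
    -- S is nonempty
    rw [nonemptyAx] at hnon
    simp only [Sat] at hnon
    push_neg at hnon
    obtain ⟨dd, hdd, -⟩ := hnon
    change Fin 1 → D at dd
    have hx0 : dd 0 ∈ S := by
      rw [hS]
      have e : (fun _ => dd 0 : Fin (c.toSig.arU (Sum.inr ())) → D) = dd :=
        funext fun k => congrArg dd (Subsingleton.elim (α := Fin 1) 0 k)
      rw [e]
      exact hdd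
    haveI : Nonempty ↥S := ⟨⟨dd 0, hx0⟩⟩
    -- S is finite
    have hg : Function.Injective
        (fun x : D => (⟨Sum.inr (), fun _ => x⟩ : Action c.toSig D)) := by
      intro a b h
      have h3 : (fun _ : Fin (c.toSig.arU (Sum.inr ())) => a) = fun _ => b :=
        eq_of_heq (Sigma.mk.inj_iff.mp h).2
      exact congrFun h3 ⟨0, Nat.one_pos⟩
    have hSfin : S.Finite := Set.Finite.preimage hg.injOn (M.finEv 0)
    haveI : Fintype ↥S := hSfin.fintype
    -- S is closed under the functions
    have hclose : ∀ (f : c.Func) (a : Fin (c.arF f) → D),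
        (∀ k, a k ∈ S) → M.funcI f a ∈ S := by
      intro f a ha
      have hf := hfunc f
      rw [funcAx] at hf
      have h2 := wrapForalls_elim M 0 (c.arF f) _ v hf a (fun k => ha k)
      rw [hS]
      have e : M.funcI f a = Tm.eval M.funcI
          (fun x => if h : x < c.arF f then a ⟨x, h⟩ else v x)
          (Tm.func f (fun k => Tm.var (k : ℕ))) := by
        simp only [Tm.eval]
        congr 1
        funext k
        rw [dif_pos k.isLt, Fin.eta]
      rw [e]
      exact h2
    let fI' : (f : c.Func) → (Fin (c.arF f) → ↥S) → ↥S :=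
      fun f a => ⟨M.funcI f (fun k => ((a k : ↥S) : D)), hclose f _ (fun k => (a k).2)⟩
    refine ⟨↥S, inferInstance, inferInstance, fI',
      fun p d => (⟨Sum.inl p, fun k => ((d k : ↥S) : D)⟩ : Action c.toSig D) ∈ M.trace 0, ?_⟩
    intro v'
    have hv : Sat M (trMain φ) (fun x => ((v' x : ↥S) : D)) 0 := by
      refine (sat_trMain_agree M φ v _ 0 ?_).mp h1
      intro x hx
      rw [hφ] at hx
      exact absurd hx (Set.notMem_empty x)
    exact (backward_tr M S hS fI' (fun _ _ => rfl) φ v').mp hv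

end LTLFO
end

section
/- Correctness of the PCP reduction: let K = (x₁,y₁),…,(x_k,y_k) be an instance of Post's Correspondence Problem over Σ = {0,1} with xᵢ, yᵢ ∈ Σ⁺. Let 𝔄 = (Σ⁺, I) be the first-order structure with domain the nonempty binary strings, with a unary interpreted predicate pcp where pcp^I(u) holds iff there exist n ≥ 1 and indices i₁,…,iₙ ∈ {1,…,k} with u = x_{i₁}⋯x_{iₙ} = y_{i₁}⋯y_{iₙ}, and let z be a unary uninterpreted predicate symbol. Let φ_K = ∃γ:z. pcp(γ). Then L(φ_K)_𝔄 ≠ ∅ if and only if K has a solution, i.e., iff there exist n ≥ 1 and indices i₁,…,iₙ with x_{i₁}⋯x_{iₙ} = y_{i₁}⋯y_{iₙ}. -/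
namespace LTLFO

/-- The signature of the PCP reduction: one unary uninterpreted predicate symbol `z`,
one unary interpreted predicate symbol `pcp`, and no function symbols. -/
def sPCP : Sig where
  Func := Empty
  arF := fun f => f.elim
  UPred := Unit
  arU := fun _ => 1
  IPred := Unit
  arI := fun _ => 1

/-- The domain `Σ⁺` of all nonempty binary strings. -/
def DomPCP : Type := {u : List Bool // u ≠ []}

/-- The PCP instance `K = (x₁,y₁),…,(x_k,y_k)` has a solution: there are `n ≥ 1` and
indices `i₁,…,iₙ` with `x_{i₁}⋯x_{iₙ} = y_{i₁}⋯y_{iₙ}`. -/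
def HasSolution {k : ℕ} (K : Fin k → List Bool × List Bool) : Prop :=
  ∃ is : List (Fin k), is ≠ [] ∧
    (is.map (fun i => (K i).1)).flatten = (is.map (fun i => (K i).2)).flatten

/-- The interpretation of `pcp`: `pcp(u)` holds iff `u` is a common concatenation
`x_{i₁}⋯x_{iₙ} = y_{i₁}⋯y_{iₙ}` for some nonempty sequence of indices. -/
def pcpInterp {k : ℕ} (K : Fin k → List Bool × List Bool) (u : DomPCP) : Prop :=
  ∃ is : List (Fin k), is ≠ [] ∧
    u.1 = (is.map (fun i => (K i).1)).flatten ∧ u.1 = (is.map (fun i => (K i).2)).flatten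

/-- The sentence `φ_K = ∃γ:z. pcp(γ)`, i.e. `¬∀γ:z.¬pcp(γ)`. -/
def phiPCP : FOForm sPCP :=
  .neg (.forall_ () (fun _ => 0) (.neg (.iatom () (fun _ => Tm.var 0))))

/-- Correctness of the PCP reduction: `L(φ_K)_𝔄 ≠ ∅` (there is a
first-order temporal structure over `𝔄`, i.e. with `pcp` interpreted as above at every
position, satisfying `φ_K`) iff the PCP instance `K` has a solution. -/
theorem pcp_reduction_correct {k : ℕ} (K : Fin k → List Bool × List Bool)
    (hK : ∀ i, (K i).1 ≠ [] ∧ (K i).2 ≠ []) :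
    (∃ (M : TStruct sPCP DomPCP) (v : ℕ → DomPCP),
        (∀ (i : ℕ) (r : sPCP.IPred) (d : Fin (sPCP.arI r) → DomPCP),
          M.predI i r d ↔ pcpInterp K (d ⟨0, Nat.one_pos⟩)) ∧
        Sat M phiPCP v 0) ↔
      HasSolution K := by
  constructor
  · rintro ⟨M, v, hI, hsat⟩
    simp only [phiPCP, Sat] at hsat
    push_neg at hsat
    obtain ⟨d, _, hd⟩ := hsat
    replace hd := (hI _ _ _).mp hd
    obtain ⟨is, hne, h1, h2⟩ := hd
    exact ⟨is, hne, h1.symm.trans h2⟩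
  · rintro ⟨is, hne, heq⟩
    have hflat : (is.map (fun i => (K i).1)).flatten ≠ [] := by
      obtain ⟨i, rest, rfl⟩ := List.exists_cons_of_ne_nil hne
      simp only [List.map_cons, List.flatten_cons, ne_eq, List.append_eq_nil_iff]
      intro ⟨h, _⟩
      exact (hK i).1 h
    set u : DomPCP := ⟨(is.map (fun i => (K i).1)).flatten, hflat⟩ with hu
    refine ⟨⟨fun f => f.elim, fun _ _ d => pcpInterp K (d ⟨0, Nat.one_pos⟩), fun _ => {⟨(), fun _ => u⟩},
      fun _ => Set.finite_singleton _⟩, fun _ => u, fun i r d => Iff.rfl, ?_⟩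
    simp only [phiPCP, Sat]
    intro h
    have := h (fun _ => u) rfl
    apply this
    show pcpInterp K u
    exact ⟨is, hne, rfl, heq⟩

end LTLFO
end

section
/- Correctness of runs of spawning automata (SA): let φ ∈ LTL^FO (not necessarily a sentence) and v a valuation, and let A_{φ,v} be the spawning automaton constructed from φ and v. For each accepting run ρ of A_{φ,v} over an input first-order temporal structure (𝔄̄, w), each formula ψ ∈ cl(φ), and each i ≥ 0: ψ ∈ ρ(i) if and only if (𝔄̄, w, v, i) ⊨ ψ. -/
namespace LTLFO

variable {s : Sig} {D : Type}

/-- The quantifier depth of a formula (the level of its spawning automaton). -/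
def depthFO : FOForm s → ℕ
  | .tt => 0
  | .uatom _ _ => 0
  | .iatom _ _ => 0
  | .neg φ => depthFO φ
  | .and φ ψ => max (depthFO φ) (depthFO ψ)
  | .next φ => depthFO φ
  | .until_ φ ψ => max (depthFO φ) (depthFO ψ)
  | .forall_ _ _ φ => depthFO φ + 1

/-- The restricted subformula function `sf|∀`, treating quantified subformulae as
atomic. -/
def sfA : FOForm s → Set (FOForm s)
  | .tt => {.tt}
  | .uatom p ts => {.uatom p ts}
  | .iatom r ts => {.iatom r ts}
  | .neg φ => insert (.neg φ) (sfA φ)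
  | .and φ ψ => insert (.and φ ψ) (sfA φ ∪ sfA ψ)
  | .next φ => insert (.next φ) (sfA φ)
  | .until_ φ ψ => insert (.until_ φ ψ) (sfA φ ∪ sfA ψ)
  | .forall_ p xs φ => {.forall_ p xs φ}

/-- The closure `cl(φ)`: the smallest set containing `sf|∀(φ)` closed under negation. -/
def cl (φ : FOForm s) : Set (FOForm s) := sfA φ ∪ (FOForm.neg '' sfA φ)

/-- A complete subset of `cl(φ)` (a state of the spawning automaton `A_φ`). -/
def Complete (φ : FOForm s) (q : Set (FOForm s)) : Prop :=
  q ⊆ cl φ ∧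
  (∀ ψ ∈ sfA φ, (ψ ∈ q ∨ FOForm.neg ψ ∈ q) ∧ ¬ (ψ ∈ q ∧ FOForm.neg ψ ∈ q)) ∧
  (∀ ψ ψ', FOForm.and ψ ψ' ∈ cl φ → (FOForm.and ψ ψ' ∈ q ↔ (ψ ∈ q ∧ ψ' ∈ q))) ∧
  (∀ ψ ψ', FOForm.until_ ψ ψ' ∈ cl φ →
    ((FOForm.until_ ψ ψ' ∈ q → (ψ' ∈ q ∨ ψ ∈ q)) ∧
      (FOForm.until_ ψ ψ' ∉ q → ψ' ∉ q)))

/-- Definedness condition of `δ→` at a state `q` on the `i`-th input `(𝔄ᵢ, wᵢ)`: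
all (possibly negated) atomic formulae of `q` are (respectively not) true there. -/
def AtomsOK (M : TStruct s D) (v : ℕ → D) (i : ℕ) (q : Set (FOForm s)) : Prop :=
  (FOForm.neg FOForm.tt ∉ q) ∧
  (∀ p ts, FOForm.uatom p ts ∈ q →
    (⟨p, fun k => Tm.eval M.funcI v (ts k)⟩ : Action s D) ∈ M.trace i) ∧
  (∀ p ts, FOForm.neg (FOForm.uatom p ts) ∈ q →
    (⟨p, fun k => Tm.eval M.funcI v (ts k)⟩ : Action s D) ∉ M.trace i) ∧
  (∀ r ts, FOForm.iatom r ts ∈ q → M.predI i r (fun k => Tm.eval M.funcI v (ts k))) ∧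
  (∀ r ts, FOForm.neg (FOForm.iatom r ts) ∈ q →
    ¬ M.predI i r (fun k => Tm.eval M.funcI v (ts k)))

/-- The transition relation `q' ∈ δ→(q, (𝔄ᵢ, wᵢ))` of `A_{φ,v}`. -/
def Step (φ : FOForm s) (M : TStruct s D) (v : ℕ → D) (i : ℕ)
    (q q' : Set (FOForm s)) : Prop :=
  AtomsOK M v i q ∧
  (∀ ψ, FOForm.next ψ ∈ cl φ → (FOForm.next ψ ∈ q ↔ ψ ∈ q')) ∧
  (∀ ψ ψ', FOForm.until_ ψ ψ' ∈ cl φ →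
    (FOForm.until_ ψ ψ' ∈ q ↔ (ψ' ∈ q ∨ (ψ ∈ q ∧ FOForm.until_ ψ ψ' ∈ q'))))

/-- A run of `A_{φ,v}` over `(𝔄̄, w)`: a sequence of complete states starting in an
initial state (one containing `φ`) and respecting `δ→`. -/
def IsRun (φ : FOForm s) (M : TStruct s D) (v : ℕ → D) (ρ : ℕ → Set (FOForm s)) : Prop :=
  (∀ i, Complete φ (ρ i)) ∧ φ ∈ ρ 0 ∧ ∀ i, Step φ M v i (ρ i) (ρ (i + 1))

/-- Local (generalized Büchi) acceptance: for each `ψUψ' ∈ cl(φ)`, the set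
`F_{ψUψ'} = {q | ψ' ∈ q ∨ ¬(ψUψ') ∈ q}` is visited infinitely often. -/
def LocallyAccepting (φ : FOForm s) (ρ : ℕ → Set (FOForm s)) : Prop :=
  ∀ ψ ψ', FOForm.until_ ψ ψ' ∈ cl φ →
    ∀ N, ∃ i, N ≤ i ∧ (ψ' ∈ ρ i ∨ FOForm.neg (FOForm.until_ ψ ψ') ∈ ρ i)

/-- The suffix `(𝔄̄ⁱ, wⁱ)` of a first-order temporal structure. -/
def TStruct.shift (M : TStruct s D) (i : ℕ) : TStruct s D where
  funcI := M.funcI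
  predI := fun j => M.predI (i + j)
  trace := fun j => M.trace (i + j)
  finEv := fun j => M.finEv (i + j)

/-- Acceptance for spawning automata `A_{φ,v}` of level at most `n`, by recursion on
the level: a run is accepting if it is a locally accepting run and, at every position
`i`, the spawning obligation `δ↓(ρ(i), (𝔄ᵢ, wᵢ))` is satisfiable by a set of spawned
automata all of which have an accepting run over the suffix `(𝔄̄ⁱ, wⁱ)`:
for every `∀x⃗:p.ψ ∈ ρ(i)` and every action `(p, d⃗) ∈ wᵢ` the automaton
`A_{ψ, v∪{x⃗↦d⃗}}` must accept, and for every `¬∀x⃗:p.ψ ∈ ρ(i)` some action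
`(p, d⃗) ∈ wᵢ` must give an accepting `A_{¬ψ, v∪{x⃗↦d⃗}}`.  (At level `0` the
spawning function is constantly `⊤`.) -/
def AcceptingAux : ℕ → TStruct s D → FOForm s → (ℕ → D) → (ℕ → Set (FOForm s)) → Prop
  | 0, M, φ, v, ρ => IsRun φ M v ρ ∧ LocallyAccepting φ ρ
  | n + 1, M, φ, v, ρ =>
      IsRun φ M v ρ ∧ LocallyAccepting φ ρ ∧
      ∀ i : ℕ,
        (∀ p xs ψ, FOForm.forall_ p xs ψ ∈ ρ i →
          ∀ d : Fin (s.arU p) → D, (⟨p, d⟩ : Action s D) ∈ M.trace i →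
            ∃ ρ', AcceptingAux n (M.shift i) ψ (updVec v xs d) ρ') ∧
        (∀ p xs ψ, FOForm.neg (FOForm.forall_ p xs ψ) ∈ ρ i →
          ∃ d : Fin (s.arU p) → D, (⟨p, d⟩ : Action s D) ∈ M.trace i ∧
            ∃ ρ', AcceptingAux n (M.shift i) (FOForm.neg ψ) (updVec v xs d) ρ')

/-- `ρ` is an accepting run of the spawning automaton `A_{φ,v}` (whose level is the
quantifier depth of `φ`) over the first-order temporal structure `M = (𝔄̄, w)`. -/
def Accepting (M : TStruct s D) (φ : FOForm s) (v : ℕ → D)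
    (ρ : ℕ → Set (FOForm s)) : Prop :=
  AcceptingAux (depthFO φ) M φ v ρ

end LTLFO

namespace LTLFO

variable {s : Sig} {D : Type}

lemma sfA_self (φ : FOForm s) : φ ∈ sfA φ := by
  cases φ <;> simp [sfA]

lemma sfA_trans {φ ψ : FOForm s} (h : ψ ∈ sfA φ) : sfA ψ ⊆ sfA φ := by
  induction φ with
  | tt => simp [sfA] at h; subst h; exact le_refl _
  | uatom p ts => simp [sfA] at h; subst h; exact le_refl _
  | iatom r ts => simp [sfA] at h; subst h; exact le_refl _
  | neg φ ih =>
    simp [sfA] at h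
    rcases h with h | h
    · subst h; exact le_refl _
    · exact (ih h).trans (Set.subset_insert _ _)
  | and φ χ ih1 ih2 =>
    simp [sfA] at h
    rcases h with h | h | h
    · subst h; exact le_refl _
    · exact (ih1 h).trans ((Set.subset_union_left).trans (Set.subset_insert _ _))
    · exact (ih2 h).trans ((Set.subset_union_right).trans (Set.subset_insert _ _))
  | next φ ih =>
    simp [sfA] at h
    rcases h with h | h
    · subst h; exact le_refl _
    · exact (ih h).trans (Set.subset_insert _ _)
  | until_ φ χ ih1 ih2 =>
    simp [sfA] at h
    rcases h with h | h | h
    · subst h; exact le_refl _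
    · exact (ih1 h).trans ((Set.subset_union_left).trans (Set.subset_insert _ _))
    · exact (ih2 h).trans ((Set.subset_union_right).trans (Set.subset_insert _ _))
  | forall_ p xs φ ih => simp [sfA] at h; subst h; exact le_refl _

lemma depth_sfA {φ ψ : FOForm s} (h : ψ ∈ sfA φ) : depthFO ψ ≤ depthFO φ := by
  induction φ with
  | tt => simp [sfA] at h; subst h; exact le_refl _
  | uatom p ts => simp [sfA] at h; subst h; exact le_refl _
  | iatom r ts => simp [sfA] at h; subst h; exact le_refl _
  | neg φ ih =>
    simp [sfA] at h
    rcases h with h | h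
    · subst h; exact le_refl _
    · exact ih h
  | and φ χ ih1 ih2 =>
    simp [sfA] at h
    rcases h with h | h | h
    · subst h; exact le_refl _
    · exact (ih1 h).trans (le_max_left _ _)
    · exact (ih2 h).trans (le_max_right _ _)
  | next φ ih =>
    simp [sfA] at h
    rcases h with h | h
    · subst h; exact le_refl _
    · exact ih h
  | until_ φ χ ih1 ih2 =>
    simp [sfA] at h
    rcases h with h | h | h
    · subst h; exact le_refl _
    · exact (ih1 h).trans (le_max_left _ _)
    · exact (ih2 h).trans (le_max_right _ _)
  | forall_ p xs φ ih => simp [sfA] at h; subst h; exact le_refl _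

lemma mem_cl_of_sfA {φ ψ : FOForm s} (h : ψ ∈ sfA φ) : ψ ∈ cl φ := Or.inl h

lemma neg_mem_iff {φ : FOForm s} {q : Set (FOForm s)} (hc : Complete φ q)
    {ψ : FOForm s} (h : ψ ∈ sfA φ) : FOForm.neg ψ ∈ q ↔ ψ ∉ q := by
  obtain ⟨-, h2, -, -⟩ := hc
  obtain ⟨hor, hnand⟩ := h2 ψ h
  constructor
  · intro hn hm; exact hnand ⟨hm, hn⟩
  · intro hn; rcases hor with h' | h'
    · exact absurd h' hn
    · exact h'

lemma shift_sat (M : TStruct s D) (ψ : FOForm s) :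
    ∀ (v : ℕ → D) (i j : ℕ), Sat (M.shift i) ψ v j ↔ Sat M ψ v (i + j) := by
  induction ψ with
  | tt => intro v i j; simp [Sat]
  | uatom p ts => intro v i j; simp [Sat, TStruct.shift]
  | iatom r ts => intro v i j; simp [Sat, TStruct.shift]
  | neg φ ih => intro v i j; simp [Sat, ih]
  | and φ χ ih1 ih2 => intro v i j; simp [Sat, ih1, ih2]
  | next φ ih =>
    intro v i j
    show Sat (M.shift i) φ v (j + 1) ↔ Sat M φ v (i + j + 1)
    rw [ih]; ring_nf
  | until_ φ χ ih1 ih2 =>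
    intro v i j
    show (∃ k, j ≤ k ∧ _ ∧ _) ↔ (∃ k, i + j ≤ k ∧ _ ∧ _)
    constructor
    · rintro ⟨k, hjk, hsk, hall⟩
      refine ⟨i + k, by omega, (ih2 v i k).mp hsk, ?_⟩
      intro m hm1 hm2
      have := hall (m - i) (by omega) (by omega)
      have := (ih1 v i (m - i)).mp this
      simpa [Nat.add_sub_cancel' (by omega : i ≤ m)] using this
    · rintro ⟨k, hjk, hsk, hall⟩
      refine ⟨k - i, by omega, ?_, ?_⟩
      · rw [ih2]; rwa [Nat.add_sub_cancel' (by omega : i ≤ k)]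
      · intro m hm1 hm2
        rw [ih1]
        exact hall (i + m) (by omega) (by omega)
  | forall_ p xs φ ih =>
    intro v i j
    show (∀ d, _ → _) ↔ (∀ d, _ → _)
    constructor
    · intro h d hd
      have := h d (by simpa [TStruct.shift] using hd)
      exact (ih _ i j).mp this
    · intro h d hd
      exact (ih _ i j).mpr (h d (by simpa [TStruct.shift] using hd))

lemma AcceptingAux_isRun {n : ℕ} {M : TStruct s D} {φ : FOForm s} {v : ℕ → D}
    {ρ : ℕ → Set (FOForm s)} (h : AcceptingAux n M φ v ρ) : IsRun φ M v ρ := by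
  cases n with
  | zero => exact h.1
  | succ n => exact h.1

/-- Core correctness lemma: local correctness of a run, with the quantified
subformulae handled by hypothesis. -/
lemma core_correct (φ : FOForm s) (M : TStruct s D) (v : ℕ → D)
    (ρ : ℕ → Set (FOForm s)) (hrun : IsRun φ M v ρ) (hloc : LocallyAccepting φ ρ)
    (Hq : ∀ p xs χ, FOForm.forall_ p xs χ ∈ sfA φ →
      ∀ i, (FOForm.forall_ p xs χ ∈ ρ i ↔ Sat M (FOForm.forall_ p xs χ) v i)) :
    ∀ ψ, ψ ∈ sfA φ → ∀ i, ψ ∈ ρ i ↔ Sat M ψ v i := by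
  obtain ⟨hcomp, hinit, hstep⟩ := hrun
  have hatoms : ∀ i, AtomsOK M v i (ρ i) := fun i => (hstep i).1
  intro ψ
  induction ψ with
  | tt =>
    intro h i
    simp only [Sat, iff_true]
    rcases ((hcomp i).2.1 _ h).1 with h' | h'
    · exact h'
    · exact absurd h' (hatoms i).1
  | uatom p ts =>
    intro h i
    constructor
    · exact (hatoms i).2.1 p ts
    · intro hs
      by_contra hm
      have hn : FOForm.neg (FOForm.uatom p ts) ∈ ρ i :=
        (neg_mem_iff (hcomp i) h).mpr hm
      exact (hatoms i).2.2.1 p ts hn hs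
  | iatom r ts =>
    intro h i
    constructor
    · exact (hatoms i).2.2.2.1 r ts
    · intro hs
      by_contra hm
      have hn : FOForm.neg (FOForm.iatom r ts) ∈ ρ i :=
        (neg_mem_iff (hcomp i) h).mpr hm
      exact (hatoms i).2.2.2.2 r ts hn hs
  | neg χ ih =>
    intro h i
    have hχ : χ ∈ sfA φ := sfA_trans h (show χ ∈ insert (FOForm.neg χ) (sfA χ) from Set.mem_insert_of_mem _ (sfA_self χ))
    rw [neg_mem_iff (hcomp i) hχ]
    show χ ∉ ρ i ↔ ¬ Sat M χ v i
    rw [ih hχ i]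
  | and χ χ' ih1 ih2 =>
    intro h i
    have hχ : χ ∈ sfA φ := sfA_trans h (by simp [sfA, Set.mem_insert_iff]; right; left; exact sfA_self χ)
    have hχ' : χ' ∈ sfA φ := sfA_trans h (by simp [sfA, Set.mem_insert_iff]; right; right; exact sfA_self χ')
    rw [((hcomp i).2.2.1 χ χ' (mem_cl_of_sfA h))]
    show _ ↔ Sat M χ v i ∧ Sat M χ' v i
    rw [ih1 hχ i, ih2 hχ' i]
  | next χ ih =>
    intro h i
    have hχ : χ ∈ sfA φ := sfA_trans h (by simp [sfA, Set.mem_insert_iff]; right; exact sfA_self χ)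
    rw [(hstep i).2.1 χ (mem_cl_of_sfA h)]
    show _ ↔ Sat M χ v (i + 1)
    exact ih hχ (i + 1)
  | until_ χ χ' ih1 ih2 =>
    intro h i
    have hχ : χ ∈ sfA φ := sfA_trans h (by simp [sfA, Set.mem_insert_iff]; right; left; exact sfA_self χ)
    have hχ' : χ' ∈ sfA φ := sfA_trans h (by simp [sfA, Set.mem_insert_iff]; right; right; exact sfA_self χ')
    have hcl : FOForm.until_ χ χ' ∈ cl φ := mem_cl_of_sfA h
    have hunf : ∀ j, FOForm.until_ χ χ' ∈ ρ j ↔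
        (χ' ∈ ρ j ∨ (χ ∈ ρ j ∧ FOForm.until_ χ χ' ∈ ρ (j + 1))) :=
      fun j => (hstep j).2.2 χ χ' hcl
    constructor
    · intro hmem
      -- claim: if χ' never in ρ on [i, i+m), then until ∈ ρ (i+m) and χ ∈ ρ j on [i,i+m)
      have claim : ∀ m, (∀ j, i ≤ j → j < i + m → χ' ∉ ρ j) →
          FOForm.until_ χ χ' ∈ ρ (i + m) ∧ ∀ j, i ≤ j → j < i + m → χ ∈ ρ j := by
        intro m
        induction m with
        | zero => intro _; exact ⟨by simpa using hmem, fun j h1 h2 => absurd h2 (by omega)⟩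
        | succ m ihm =>
          intro hnone
          obtain ⟨hu, hall⟩ := ihm (fun j h1 h2 => hnone j h1 (by omega))
          have hnχ' : χ' ∉ ρ (i + m) := hnone (i + m) (by omega) (by omega)
          rcases (hunf (i + m)).mp hu with h' | ⟨hx, hu'⟩
          · exact absurd h' hnχ'
          · refine ⟨hu', ?_⟩
            intro j h1 h2
            rcases Nat.lt_or_ge j (i + m) with h3 | h3
            · exact hall j h1 h3
            · have : j = i + m := by omega
              subst this; exact hx
      have hexists : ∃ k, i ≤ k ∧ χ' ∈ ρ k := by
        by_contra hne
        push_neg at hne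
        obtain ⟨j, hij, hor⟩ := hloc χ χ' hcl i
        rcases hor with h' | h'
        · exact hne j hij h'
        · have hu : FOForm.until_ χ χ' ∈ ρ j := by
            have := (claim (j - i) (fun m h1 h2 => hne m h1)).1
            simpa [Nat.add_sub_cancel' hij] using this
          exact (neg_mem_iff (hcomp j) h).mp h' hu
      classical
      obtain ⟨k0, hk0⟩ := hexists
      have hP : ∃ k, i ≤ k ∧ χ' ∈ ρ k := ⟨k0, hk0⟩
      let k := Nat.find hP
      have hkspec := Nat.find_spec hP
      have hkmin : ∀ j < k, ¬(i ≤ j ∧ χ' ∈ ρ j) := fun j hj => Nat.find_min hP hj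
      obtain ⟨hall⟩ : Nonempty (∀ j, i ≤ j → j < k → χ ∈ ρ j) := by
        have := (claim (k - i) (fun j h1 h2 => by
          intro hc; exact hkmin j (by omega) ⟨h1, hc⟩)).2
        exact ⟨fun j h1 h2 => this j h1 (by omega)⟩
      refine ⟨k, hkspec.1, (ih2 hχ' k).mp hkspec.2, fun j h1 h2 => (ih1 hχ j).mp (hall j h1 h2)⟩
    · rintro ⟨k, hik, hsk, hsall⟩
      by_contra hnm
      have claim : ∀ m, i + m ≤ k → FOForm.until_ χ χ' ∉ ρ (i + m) := by
        intro m
        induction m with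
        | zero => intro _; simpa using hnm
        | succ m ihm =>
          intro hle
          have hprev := ihm (by omega)
          have hx : χ ∈ ρ (i + m) :=
            (ih1 hχ (i + m)).mpr (hsall (i + m) (by omega) (by omega))
          intro hc
          exact hprev ((hunf (i + m)).mpr (Or.inr ⟨hx, hc⟩))
      have h1 : FOForm.until_ χ χ' ∉ ρ k := by
        have := claim (k - i) (by omega)
        simpa [Nat.add_sub_cancel' hik] using this
      have h2 : χ' ∈ ρ k := (ih2 hχ' k).mpr hsk
      exact h1 ((hunf k).mpr (Or.inl h2))
  | forall_ p xs χ ih =>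
    intro h i
    exact Hq p xs χ h i

lemma aux_correct : ∀ (n : ℕ) (φ : FOForm s) (M : TStruct s D) (v : ℕ → D)
    (ρ : ℕ → Set (FOForm s)), depthFO φ ≤ n → AcceptingAux n M φ v ρ →
    ∀ ψ ∈ sfA φ, ∀ i : ℕ, ψ ∈ ρ i ↔ Sat M ψ v i := by
  intro n
  induction n with
  | zero =>
    intro φ M v ρ hd hacc
    obtain ⟨hrun, hloc⟩ := hacc
    refine core_correct φ M v ρ hrun hloc ?_
    intro p xs χ hmem i
    exfalso
    have := depth_sfA hmem
    simp [depthFO] at this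
    omega
  | succ n ihn =>
    intro φ M v ρ hd hacc
    obtain ⟨hrun, hloc, hspawn⟩ := hacc
    refine core_correct φ M v ρ hrun hloc ?_
    intro p xs χ hmem i
    have hdχ : depthFO χ ≤ n := by
      have := depth_sfA hmem
      simp [depthFO] at this
      omega
    constructor
    · intro hm
      intro d hd'
      obtain ⟨ρ', hacc'⟩ := (hspawn i).1 p xs χ hm d hd'
      have hrun' := AcceptingAux_isRun hacc'
      have := (ihn χ (M.shift i) (updVec v xs d) ρ' hdχ hacc' χ (sfA_self χ) 0).mp hrun'.2.1
      have := (shift_sat M χ (updVec v xs d) i 0).mp this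
      simpa using this
    · intro hs
      by_contra hm
      have hn : FOForm.neg (FOForm.forall_ p xs χ) ∈ ρ i :=
        (neg_mem_iff (hrun.1 i) hmem).mpr hm
      obtain ⟨d, hd', ρ', hacc'⟩ := (hspawn i).2 p xs χ hn
      have hrun' := AcceptingAux_isRun hacc'
      have hnegsat := (ihn (FOForm.neg χ) (M.shift i) (updVec v xs d) ρ'
        (by simpa [depthFO] using hdχ) hacc' (FOForm.neg χ) (sfA_self _) 0).mp hrun'.2.1
      have hnegsat' := (shift_sat M (FOForm.neg χ) (updVec v xs d) i 0).mp hnegsat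
      have hsat : Sat M χ (updVec v xs d) i := hs d hd'
      exact hnegsat' (by simpa using hsat)

/-- Correctness of runs of spawning automata: for every LTL^FO
formula `φ` (not necessarily a sentence), every valuation `v`, and every accepting run
`ρ` of `A_{φ,v}` over an input first-order temporal structure `(𝔄̄, w)`, for each
`ψ ∈ cl(φ)` and each `i ≥ 0`: `ψ ∈ ρ(i)` iff `(𝔄̄, w, v, i) ⊨ ψ`. -/
theorem run_correctness {s : Sig} {D : Type}
    (φ : FOForm s) (v : ℕ → D) (M : TStruct s D)
    (ρ : ℕ → Set (FOForm s)) (hacc : Accepting M φ v ρ) :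
    ∀ ψ ∈ cl φ, ∀ i : ℕ, ψ ∈ ρ i ↔ Sat M ψ v i := by
  have hrun : IsRun φ M v ρ := AcceptingAux_isRun hacc
  have hmain := aux_correct (depthFO φ) φ M v ρ (le_refl _) hacc
  intro ψ hψ i
  rcases hψ with h | ⟨χ, hχ, rfl⟩
  · exact hmain ψ h i
  · rw [neg_mem_iff (hrun.1 i) hχ]
    show χ ∉ ρ i ↔ ¬ Sat M χ v i
    rw [hmain χ hχ i]

end LTLFO
end
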